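/- Let I_1, I_2, … be independent Bernoulli random variables with P(I_i = 1) = 1/(1 + (i-1)^s), let N_m = ∑_{i=1}^{m} I_i, and define the k-th record time event {L_k = n} = {N_{n-1} = k-1 and I_n = 1}. Then for n ≥ k ≥ 1, P(L_k = n) = S_s(n-1, k-1) / ∏_{i=1}^{n} (1 + (i-1)^s). -/

import Mathlib

open MeasureTheory ProbabilityTheory

/-- Stirling numbers of the first kind with level `s`. -/
def Slev (s : ℕ) : ℕ → ℕ → ℕ
  | 0, 0 => 1
  | 0, _ + 1 => 0
  | _ + 1, 0 => 0
  | n + 1, k + 1 => Slev s n k + n ^ s * Slev s n (k + 1)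

lemma slev_zero (s : ℕ) (hs : 0 < s) (m : ℕ) : m ^ s * Slev s m 0 = 0 := by
  cases m with
  | zero => simp [hs.ne']
  | succ m => simp [Slev]

lemma ennreal_div_mul_div (a b c d : ENNReal) (hb : b ≠ 0) (hb' : b ≠ ⊤) :
    a / b * (c / d) = a * c / (b * d) := by
  rw [div_eq_mul_inv, div_eq_mul_inv, div_eq_mul_inv,
    ENNReal.mul_inv (Or.inl hb) (Or.inl hb')]
  ring

lemma key (s : ℕ) (hs : 0 < s) {Ω : Type*} [MeasurableSpace Ω] (μ : Measure Ω)
    [IsProbabilityMeasure μ] (I : ℕ → Ω → ℕ)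
    (hmeas : ∀ i, Measurable (I i))
    (hval : ∀ i ω, I i ω = 0 ∨ I i ω = 1)
    (hindep : iIndepFun I μ)
    (hp : ∀ i : ℕ, 1 ≤ i → μ {ω | I i ω = 1} = 1 / (1 + ((i - 1 : ℕ) : ENNReal) ^ s)) :
    ∀ m j, μ {ω | (∑ i ∈ Finset.Icc 1 m, I i ω) = j} =
      (Slev s m j : ENNReal) / ∏ i ∈ Finset.Icc 1 m, (1 + ((i - 1 : ℕ) : ENNReal) ^ s) := by
  -- basic facts
  have hqt : ∀ i : ℕ, ((i : ℕ) : ENNReal) ^ s ≠ ⊤ := fun i =>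
    ENNReal.pow_ne_top (ENNReal.natCast_ne_top i)
  have hd0 : ∀ i : ℕ, (1 : ENNReal) + ((i : ℕ) : ENNReal) ^ s ≠ 0 := by
    intro i; simp [add_eq_zero]
  have hdt : ∀ i : ℕ, (1 : ENNReal) + ((i : ℕ) : ENNReal) ^ s ≠ ⊤ := by
    intro i
    simp [ENNReal.add_ne_top, hqt i]
  have h0 : ∀ i, 1 ≤ i →
      μ {ω | I i ω = 0} = ((i - 1 : ℕ) : ENNReal) ^ s / (1 + ((i - 1 : ℕ) : ENNReal) ^ s) := by
    intro i hi
    set q : ENNReal := ((i - 1 : ℕ) : ENNReal) ^ s with hq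
    have hcompl : {ω | I i ω = 0} = {ω | I i ω = 1}ᶜ := by
      ext ω
      rcases hval i ω with h | h <;> simp [h]
    have hms : MeasurableSet {ω | I i ω = 1} := hmeas i (measurableSet_singleton 1)
    rw [hcompl, prob_compl_eq_one_sub hms, hp i hi]
    have hsum : q / (1 + q) + 1 / (1 + q) = 1 := by
      rw [ENNReal.div_add_div_same, ENNReal.div_eq_one_iff (hd0 _) (hdt _), add_comm]
    exact ENNReal.sub_eq_of_eq_add (ENNReal.div_lt_top ENNReal.one_ne_top (hd0 _)).ne hsum.symm
  intro m
  induction m with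
  | zero =>
    intro j
    have he : Finset.Icc 1 0 = (∅ : Finset ℕ) := by simp
    cases j with
    | zero => simp [he, Slev]
    | succ t =>
      have : {ω : Ω | (∑ i ∈ Finset.Icc 1 0, I i ω) = t + 1} = ∅ := by
        ext ω; simp [he]
      simp [this, Slev]
  | succ m ih =>
    intro j
    have hq1 : ((m + 1 - 1 : ℕ) : ENNReal) ^ s = ((m : ℕ) : ENNReal) ^ s := by norm_num
    set q : ENNReal := ((m : ℕ) : ENNReal) ^ s with hqdef
    set P : ENNReal := ∏ i ∈ Finset.Icc 1 m, (1 + ((i - 1 : ℕ) : ENNReal) ^ s) with hPdef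
    have hP0 : P ≠ 0 := by
      rw [hPdef, Finset.prod_ne_zero_iff]
      intro i _; exact hd0 _
    have hPt : P ≠ ⊤ := ENNReal.prod_ne_top fun i _ => hdt _
    have hProd : ∏ i ∈ Finset.Icc 1 (m + 1), (1 + ((i - 1 : ℕ) : ENNReal) ^ s)
        = P * (1 + q) := by
      rw [Finset.prod_Icc_succ_top (by omega), hq1]
    have hIF : IndepFun (∑ i ∈ Finset.Icc 1 m, I i) (I (m + 1)) μ :=
      hindep.indepFun_finsetSum_of_notMem hmeas (by simp)
    have hmul : ∀ a b : ℕ,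
        μ {ω | (∑ i ∈ Finset.Icc 1 m, I i ω) = a ∧ I (m + 1) ω = b}
          = μ {ω | (∑ i ∈ Finset.Icc 1 m, I i ω) = a} * μ {ω | I (m + 1) ω = b} := by
      intro a b
      have h := hIF.measure_inter_preimage_eq_mul {a} {b}
        (measurableSet_singleton a) (measurableSet_singleton b)
      have e1 : {ω | (∑ i ∈ Finset.Icc 1 m, I i ω) = a ∧ I (m + 1) ω = b}
          = (∑ i ∈ Finset.Icc 1 m, I i) ⁻¹' {a} ∩ (I (m + 1)) ⁻¹' {b} := by
        ext ω; simp [Finset.sum_apply]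
      have e2 : {ω | (∑ i ∈ Finset.Icc 1 m, I i ω) = a}
          = (∑ i ∈ Finset.Icc 1 m, I i) ⁻¹' {a} := by
        ext ω; simp [Finset.sum_apply]
      rw [e1, e2]; exact h
    have hsum_eq : ∀ ω, (∑ i ∈ Finset.Icc 1 (m + 1), I i ω)
        = (∑ i ∈ Finset.Icc 1 m, I i ω) + I (m + 1) ω := by
      intro ω; exact Finset.sum_Icc_succ_top (by omega) _
    have hp1 : μ {ω | I (m + 1) ω = 1} = 1 / (1 + q) := by
      rw [hp (m + 1) (by omega), hq1]
    have hp0 : μ {ω | I (m + 1) ω = 0} = q / (1 + q) := by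
      rw [h0 (m + 1) (by omega), hq1]
    cases j with
    | zero =>
      have hset : {ω | (∑ i ∈ Finset.Icc 1 (m + 1), I i ω) = 0}
          = {ω | (∑ i ∈ Finset.Icc 1 m, I i ω) = 0 ∧ I (m + 1) ω = 0} := by
        ext ω
        simp only [Set.mem_setOf_eq, hsum_eq ω, Nat.add_eq_zero]
      rw [hset, hmul, ih, hp0, ennreal_div_mul_div _ _ _ _ hP0 hPt, hProd]
      have : (Slev s m 0 : ENNReal) * q = ((m ^ s * Slev s m 0 : ℕ) : ENNReal) := by
        push_cast; ring
      rw [this, slev_zero s hs m, show Slev s (m + 1) 0 = 0 from rfl]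
    | succ t =>
      have hset : {ω | (∑ i ∈ Finset.Icc 1 (m + 1), I i ω) = t + 1}
          = {ω | (∑ i ∈ Finset.Icc 1 m, I i ω) = t + 1 ∧ I (m + 1) ω = 0}
            ∪ {ω | (∑ i ∈ Finset.Icc 1 m, I i ω) = t ∧ I (m + 1) ω = 1} := by
        ext ω
        simp only [Set.mem_setOf_eq, Set.mem_union, hsum_eq ω]
        rcases hval (m + 1) ω with h | h <;> simp [h] <;> omega
      have hdisj : Disjoint {ω | (∑ i ∈ Finset.Icc 1 m, I i ω) = t + 1 ∧ I (m + 1) ω = 0}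
          {ω | (∑ i ∈ Finset.Icc 1 m, I i ω) = t ∧ I (m + 1) ω = 1} := by
        rw [Set.disjoint_left]
        rintro ω ⟨_, h0'⟩ ⟨_, h1'⟩
        simp [h0'] at h1'
      have hmB : MeasurableSet {ω | (∑ i ∈ Finset.Icc 1 m, I i ω) = t ∧ I (m + 1) ω = 1} := by
        have hS : Measurable fun ω => ∑ i ∈ Finset.Icc 1 m, I i ω :=
          Finset.measurable_sum _ fun i _ => hmeas i
        exact (hS (measurableSet_singleton t)).inter (hmeas (m + 1) (measurableSet_singleton 1))
      rw [hset, measure_union hdisj hmB, hmul, hmul, ih, ih, hp0, hp1,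
        ennreal_div_mul_div _ _ _ _ hP0 hPt, ennreal_div_mul_div _ _ _ _ hP0 hPt,
        ENNReal.div_add_div_same, hProd]
      congr 1
      have : (Slev s (m + 1) (t + 1) : ENNReal)
          = (Slev s m t : ENNReal) + ((m : ℕ) : ENNReal) ^ s * (Slev s m (t + 1) : ENNReal) := by
        rw [show Slev s (m + 1) (t + 1) = Slev s m t + m ^ s * Slev s m (t + 1) from rfl]
        push_cast; ring
      rw [this]; ring

theorem stmt_10 (s : ℕ) (hs : 0 < s)
    {Ω : Type*} [MeasurableSpace Ω] (μ : Measure Ω) [IsProbabilityMeasure μ]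
    (I : ℕ → Ω → ℕ)
    (hmeas : ∀ i, Measurable (I i))
    (hval : ∀ i ω, I i ω = 0 ∨ I i ω = 1)
    (hindep : iIndepFun I μ)
    (hp : ∀ i : ℕ, 1 ≤ i → μ {ω | I i ω = 1} = 1 / (1 + ((i - 1 : ℕ) : ENNReal) ^ s))
    (k n : ℕ) (hk : 1 ≤ k) (hn : k ≤ n) :
    μ {ω | (∑ i ∈ Finset.Icc 1 (n - 1), I i ω) = k - 1 ∧ I n ω = 1} =
      (Slev s (n - 1) (k - 1) : ENNReal) /
        ∏ i ∈ Finset.Icc 1 n, (1 + ((i - 1 : ℕ) : ENNReal) ^ s) := by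
  obtain ⟨m, rfl⟩ : ∃ m, n = m + 1 := ⟨n - 1, by omega⟩
  have hm1 : m + 1 - 1 = m := by omega
  rw [hm1]
  have hqt : ∀ i : ℕ, ((i : ℕ) : ENNReal) ^ s ≠ ⊤ := fun i =>
    ENNReal.pow_ne_top (ENNReal.natCast_ne_top i)
  have hd0 : ∀ i : ℕ, (1 : ENNReal) + ((i : ℕ) : ENNReal) ^ s ≠ 0 := by
    intro i; simp [add_eq_zero]
  have hdt : ∀ i : ℕ, (1 : ENNReal) + ((i : ℕ) : ENNReal) ^ s ≠ ⊤ := by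
    intro i; simp [ENNReal.add_ne_top, hqt i]
  set q : ENNReal := ((m : ℕ) : ENNReal) ^ s with hqdef
  set P : ENNReal := ∏ i ∈ Finset.Icc 1 m, (1 + ((i - 1 : ℕ) : ENNReal) ^ s) with hPdef
  have hP0 : P ≠ 0 := by
    rw [hPdef, Finset.prod_ne_zero_iff]; intro i _; exact hd0 _
  have hPt : P ≠ ⊤ := ENNReal.prod_ne_top fun i _ => hdt _
  have hProd : ∏ i ∈ Finset.Icc 1 (m + 1), (1 + ((i - 1 : ℕ) : ENNReal) ^ s)
      = P * (1 + q) := by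
    rw [Finset.prod_Icc_succ_top (by omega)]
    simp only [Nat.add_sub_cancel]
    rfl
  have hIF : IndepFun (∑ i ∈ Finset.Icc 1 m, I i) (I (m + 1)) μ :=
    hindep.indepFun_finsetSum_of_notMem hmeas (by simp)
  have hmul :
      μ {ω | (∑ i ∈ Finset.Icc 1 m, I i ω) = k - 1 ∧ I (m + 1) ω = 1}
        = μ {ω | (∑ i ∈ Finset.Icc 1 m, I i ω) = k - 1} * μ {ω | I (m + 1) ω = 1} := by
    have h := hIF.measure_inter_preimage_eq_mul {k - 1} {1}
      (measurableSet_singleton _) (measurableSet_singleton _)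
    have e1 : {ω | (∑ i ∈ Finset.Icc 1 m, I i ω) = k - 1 ∧ I (m + 1) ω = 1}
        = (∑ i ∈ Finset.Icc 1 m, I i) ⁻¹' {k - 1} ∩ (I (m + 1)) ⁻¹' {1} := by
      ext ω; simp [Finset.sum_apply]
    have e2 : {ω | (∑ i ∈ Finset.Icc 1 m, I i ω) = k - 1}
        = (∑ i ∈ Finset.Icc 1 m, I i) ⁻¹' {k - 1} := by
      ext ω; simp [Finset.sum_apply]
    rw [e1, e2]; exact h
  have hp1 : μ {ω | I (m + 1) ω = 1} = 1 / (1 + q) := by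
    rw [hp (m + 1) (by omega)]
    simp only [Nat.add_sub_cancel]
    rfl
  rw [hmul, key s hs μ I hmeas hval hindep hp, hp1,
    ennreal_div_mul_div _ _ _ _ hP0 hPt, hProd, mul_one]
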